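/- Exactness of the representation (membership): a nonempty itemset X belongs to MCR if and only if X ∈ RMCR, or there exist M ∈ MMCR and F ∈ MFCR with M ⊆ X ⊆ F and bond(M) = bond(F). -/

import Mathlib

variable {τ ι : Type*} [Fintype τ] [Fintype ι]

/-- Conjunctive support: number of transactions containing every item of `X`. -/
noncomputable def SConj (R : τ → ι → Prop) (X : Set ι) : ℕ := Set.ncard {t : τ | ∀ i ∈ X, R t i}

/-- Disjunctive support: number of transactions containing some item of `X`. -/
noncomputable def SDisj (R : τ → ι → Prop) (X : Set ι) : ℕ := Set.ncard {t : τ | ∃ i ∈ X, R t i}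

/-- Negative support: number of transactions containing no item of `X`. -/
noncomputable def SNeg (R : τ → ι → Prop) (X : Set ι) : ℕ := Set.ncard {t : τ | ∀ i ∈ X, ¬ R t i}

/-- The bond measure of `X` (0 when `SDisj X = 0`). -/
noncomputable def bond (R : τ → ι → Prop) (X : Set ι) : ℚ :=
  (SConj R X : ℚ) / (SDisj R X : ℚ)

/-- The closure operator associated with the bond measure. -/
noncomputable def fbond (R : τ → ι → Prop) (X : Set ι) : Set ι :=
  X ∪ {i : ι | i ∉ X ∧ bond R X = bond R (insert i X)}

/-- Rare correlated patterns. -/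
def MCR (R : τ → ι → Prop) (minsupp : ℕ) (minbond : ℚ) : Set (Set ι) :=
  {X | X.Nonempty ∧ SConj R X < minsupp ∧ minbond ≤ bond R X}

/-- Closed rare correlated patterns. -/
def MFCR (R : τ → ι → Prop) (minsupp : ℕ) (minbond : ℚ) : Set (Set ι) :=
  {X | X ∈ MCR R minsupp minbond ∧ ∀ X₁ : Set ι, X ⊂ X₁ → bond R X₁ < bond R X}

/-- Minimal rare correlated patterns. -/
def MMCR (R : τ → ι → Prop) (minsupp : ℕ) (minbond : ℚ) : Set (Set ι) :=
  {X | X ∈ MCR R minsupp minbond ∧ ∀ X₁ : Set ι, X₁.Nonempty → X₁ ⊂ X → bond R X < bond R X₁}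

/-- The concise exact representation. -/
def RMCR (R : τ → ι → Prop) (minsupp : ℕ) (minbond : ℚ) : Set (Set ι) :=
  MMCR R minsupp minbond ∪ MFCR R minsupp minbond

lemma SConj_anti (R : τ → ι → Prop) {X Y : Set ι} (h : X ⊆ Y) : SConj R Y ≤ SConj R X :=
  Set.ncard_le_ncard (fun t ht i hi => ht i (h hi)) (Set.toFinite _)

lemma SDisj_mono (R : τ → ι → Prop) {X Y : Set ι} (h : X ⊆ Y) : SDisj R X ≤ SDisj R Y :=
  Set.ncard_le_ncard (fun t ⟨i, hi, hR⟩ => ⟨i, h hi, hR⟩) (Set.toFinite _)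

lemma SConj_le_SDisj (R : τ → ι → Prop) {X : Set ι} (hX : X.Nonempty) :
    SConj R X ≤ SDisj R X := by
  obtain ⟨i0, hi0⟩ := hX
  exact Set.ncard_le_ncard (fun t ht => ⟨i0, hi0, ht i0 hi0⟩) (Set.toFinite _)

lemma bond_nonneg (R : τ → ι → Prop) (X : Set ι) : 0 ≤ bond R X :=
  div_nonneg (by positivity) (by positivity)

lemma bond_anti (R : τ → ι → Prop) {X Y : Set ι} (hX : X.Nonempty) (h : X ⊆ Y) :
    bond R Y ≤ bond R X := by
  rcases Nat.eq_zero_or_pos (SConj R Y) with hc | hc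
  · rw [bond, hc]
    simpa using bond_nonneg R X
  · have hcX : 0 < SConj R X := lt_of_lt_of_le hc (SConj_anti R h)
    have hdX : 0 < SDisj R X := lt_of_lt_of_le hcX (SConj_le_SDisj R hX)
    exact div_le_div₀ (by positivity) (by exact_mod_cast SConj_anti R h)
      (by exact_mod_cast hdX) (by exact_mod_cast SDisj_mono R h)

/-- If a nonempty subset has the same bond, its conjunctive support is at most that of the
superset. -/
lemma SConj_le_of_bond_eq (R : τ → ι → Prop) {M X : Set ι} (hM : M.Nonempty) (hMX : M ⊆ X)
    (hb : bond R M = bond R X) : SConj R M ≤ SConj R X := by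
  rcases Nat.eq_zero_or_pos (SConj R X) with hc | hc
  · -- bond X = 0, hence bond M = 0, hence SConj M = 0
    have hbX : bond R X = 0 := by rw [bond, hc]; simp
    have hbM : bond R M = 0 := hb.trans hbX
    rcases Nat.eq_zero_or_pos (SConj R M) with h0 | h0
    · omega
    · exfalso
      have hdM : 0 < SDisj R M := lt_of_lt_of_le h0 (SConj_le_SDisj R hM)
      have : (0 : ℚ) < bond R M := by
        rw [bond]
        apply div_pos <;> exact_mod_cast ‹_›
      rw [hbM] at this; exact lt_irrefl 0 this
  · have hcM : 0 < SConj R M := lt_of_lt_of_le hc (SConj_anti R hMX)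
    have hdM : 0 < SDisj R M := lt_of_lt_of_le hcM (SConj_le_SDisj R hM)
    have hdX : 0 < SDisj R X := lt_of_lt_of_le hdM (SDisj_mono R hMX)
    have hcross : (SConj R M : ℚ) * (SDisj R X : ℚ) = (SConj R X : ℚ) * (SDisj R M : ℚ) := by
      rw [bond, bond, div_eq_div_iff (Nat.cast_pos.mpr hdM).ne' (Nat.cast_pos.mpr hdX).ne'] at hb
      exact hb
    have hcross' : SConj R M * SDisj R X = SConj R X * SDisj R M := by exact_mod_cast hcross
    have hdd : SDisj R M ≤ SDisj R X := SDisj_mono R hMX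
    nlinarith [hcross', hdd, hdM]

theorem stmt14 (R : τ → ι → Prop) (minsupp : ℕ) (minbond : ℚ)
    (hclass : ∀ X Y : Set ι, X.Nonempty → Y.Nonempty → fbond R X = fbond R Y →
      X ∈ MCR R minsupp minbond → Y ∈ MCR R minsupp minbond)
    (X : Set ι) (hX : X.Nonempty) :
    X ∈ MCR R minsupp minbond ↔
      X ∈ RMCR R minsupp minbond ∨
      ∃ M F : Set ι, M ∈ MMCR R minsupp minbond ∧ F ∈ MFCR R minsupp minbond ∧
        M ⊆ X ∧ X ⊆ F ∧ bond R M = bond R F := by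
  constructor
  · intro hXmcr
    obtain ⟨hXne, hXsupp, hXbond⟩ := hXmcr
    right
    -- construct minimal M
    set SM : Set (Set ι) := {M | M.Nonempty ∧ M ⊆ X ∧ bond R M = bond R X} with hSM
    obtain ⟨M, hMmem, hMmin⟩ : ∃ M ∈ SM, ∀ M' ∈ SM, M'.ncard ≤ M.ncard → M.ncard = M'.ncard := by
      obtain ⟨M, hM, h⟩ := Set.Finite.exists_minimalFor (fun s => s.ncard) SM
        (Set.toFinite SM) ⟨X, hX, subset_rfl, rfl⟩
      exact ⟨M, hM, fun M' h1 h2 => le_antisymm (h h1 h2) h2⟩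
    obtain ⟨hMne, hMX, hMb⟩ := hMmem
    -- construct maximal F
    set SF : Set (Set ι) := {F | X ⊆ F ∧ bond R F = bond R X} with hSF
    obtain ⟨F, hFmem, hFmax⟩ : ∃ F ∈ SF, ∀ F' ∈ SF, F.ncard ≤ F'.ncard → F.ncard = F'.ncard := by
      obtain ⟨F, hF, h⟩ := Set.Finite.exists_maximalFor (fun s => s.ncard) SF
        (Set.toFinite SF) ⟨X, subset_rfl, rfl⟩
      exact ⟨F, hF, fun F' h1 h2 => le_antisymm h2 (h h1 h2)⟩
    obtain ⟨hXF, hFb⟩ := hFmem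
    have hFne : F.Nonempty := hX.mono hXF
    have hMmcr : M ∈ MCR R minsupp minbond :=
      ⟨hMne, lt_of_le_of_lt (SConj_le_of_bond_eq R hMne hMX hMb) hXsupp, hMb ▸ hXbond⟩
    have hFmcr : F ∈ MCR R minsupp minbond :=
      ⟨hFne, lt_of_le_of_lt (SConj_anti R hXF) hXsupp, hFb ▸ hXbond⟩
    refine ⟨M, F, ⟨hMmcr, ?_⟩, ⟨hFmcr, ?_⟩, hMX, hXF, hMb.trans hFb.symm⟩
    · intro X₁ hX₁ne hX₁M
      have hle : bond R M ≤ bond R X₁ := bond_anti R hX₁ne hX₁M.subset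
      rcases eq_or_lt_of_le hle with heq | hlt
      · exfalso
        have hX₁mem : X₁ ∈ SM := ⟨hX₁ne, hX₁M.subset.trans hMX, heq ▸ hMb⟩
        have := hMmin X₁ hX₁mem (le_of_lt (Set.ncard_lt_ncard hX₁M (Set.toFinite M)))
        exact absurd this (ne_of_gt (Set.ncard_lt_ncard hX₁M (Set.toFinite M)))
      · exact hlt
    · intro X₁ hFX₁
      have hle : bond R X₁ ≤ bond R F := bond_anti R hFne hFX₁.subset
      rcases eq_or_lt_of_le hle with heq | hlt
      · exfalso
        have hX₁mem : X₁ ∈ SF := ⟨hXF.trans hFX₁.subset, heq ▸ hFb⟩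
        have := hFmax X₁ hX₁mem (le_of_lt (Set.ncard_lt_ncard hFX₁ (Set.toFinite X₁)))
        exact absurd this (ne_of_lt (Set.ncard_lt_ncard hFX₁ (Set.toFinite X₁)))
      · exact hlt
  · rintro (h | ⟨M, F, ⟨hMmcr, _⟩, ⟨hFmcr, _⟩, hMX, hXF, hMFb⟩)
    · rcases h with h | h
      · exact h.1
      · exact h.1
    · obtain ⟨hMne, hMsupp, hMbond⟩ := hMmcr
      obtain ⟨hFne, hFsupp, hFbond⟩ := hFmcr
      have h1 : bond R X ≤ bond R M := bond_anti R hMne hMX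
      have h2 : bond R F ≤ bond R X := bond_anti R hX hXF
      have hXb : bond R X = bond R M := le_antisymm h1 (hMFb ▸ h2)
      exact ⟨hX, lt_of_le_of_lt (SConj_anti R hMX) hMsupp, hXb ▸ hMbond⟩
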